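/- Let V be a finite-dimensional real inner product space with orthogonal decomposition V = ⊕_{i=−d}^{d} V_i, and let N : V → V be linear with N(V_i) ⊆ V_{i−2} (so N^{d+1}=0) and with N^d : V_d → V_{−d} an isometric isomorphism. Set T = e^N. Then there exists a constant C > 0 (depending only on N and d) with the following property: if ξ ⊂ V is a linear subspace, k ≥ 1 an integer, t > 0, and v ∈ V a unit vector such that ‖T^k v‖ ≥ e^t ‖T^k w‖ for every unit vector w ∈ ξ, then every unit vector w ∈ ξ satisfies ‖w_d‖ ≤ C·max(1/k, e^{−t}), where w_d denotes the orthogonal projection of w to V_d. Equivalently, the distance from any unit vector of ξ to the subspace W_{d−1} := ⊕_{i<d} V_i is at most C·max(1/k, e^{−t}). -/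

import Mathlib

open scoped RealInnerProductSpace

/-- Let V = ⊕_{i=-d}^{d} V_i be an orthogonal decomposition of a finite-dimensional
real inner product space, N : V → V with N(V_i) ⊆ V_{i−2} and with
N^d : V_d → V_{−d} an isometric isomorphism, and T^k = e^{kN}.  Then there is C > 0
such that: if ξ is a subspace, k ≥ 1, t > 0, and v is a unit vector with
‖T^k v‖ ≥ e^t ‖T^k w‖ for every unit vector w ∈ ξ, then every unit vector w ∈ ξ
satisfies ‖w_d‖ ≤ C·max(1/k, e^{−t}), where w_d is the orthogonal projection
of w to V_d. -/
theorem control_of_planes_under_unipotent_domination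
    {V : Type*} [NormedAddCommGroup V] [InnerProductSpace ℝ V]
    [FiniteDimensional ℝ V] (d : ℕ) (Vsub : ℤ → Submodule ℝ V)
    (hsupp : ∀ i : ℤ, (d : ℤ) < |i| → Vsub i = ⊥)
    (hsup : ⨆ i, Vsub i = ⊤)
    (horth : ∀ i j : ℤ, i ≠ j → ∀ x ∈ Vsub i, ∀ y ∈ Vsub j, ⟪x, y⟫ = 0)
    (N : V →ₗ[ℝ] V)
    (hN : ∀ i : ℤ, (Vsub i).map N ≤ Vsub (i - 2))
    (hiso : ∀ x ∈ Vsub (d : ℤ), ‖(N ^ d) x‖ = ‖x‖)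
    (hsurj : (Vsub (d : ℤ)).map (N ^ d) = Vsub (-(d : ℤ))) :
    ∃ C > 0, ∀ (ξ : Submodule ℝ V) (k : ℕ) (t : ℝ) (v : V),
      1 ≤ k → 0 < t → ‖v‖ = 1 →
      (∀ w ∈ ξ, ‖w‖ = 1 →
        Real.exp t * ‖(∑ j ∈ Finset.range (d + 1),
            ((k : ℝ) ^ j / (Nat.factorial j : ℝ)) • N ^ j) w‖
          ≤ ‖(∑ j ∈ Finset.range (d + 1),
            ((k : ℝ) ^ j / (Nat.factorial j : ℝ)) • N ^ j) v‖) →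
      ∀ w ∈ ξ, ‖w‖ = 1 →
        ‖(Submodule.orthogonalProjectionOnto (Vsub (d : ℤ)) w : V)‖
          ≤ C * max (1 / (k : ℝ)) (Real.exp (-t)) := by
  classical
  -- operator norms of the powers of N
  set c : ℕ → ℝ := fun j => ‖LinearMap.toContinuousLinearMap (N ^ j)‖ with hc
  have hcb : ∀ (j : ℕ) (x : V), ‖(N ^ j) x‖ ≤ c j * ‖x‖ := fun j x => by
    simpa using (LinearMap.toContinuousLinearMap (N ^ j)).le_opNorm x
  have hc0 : ∀ j, 0 ≤ c j := fun j => norm_nonneg _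
  set A : ℝ := ∑ j ∈ Finset.range d, c j / (Nat.factorial j : ℝ) with hA
  set B : ℝ := ∑ j ∈ Finset.range (d + 1), c j / (Nat.factorial j : ℝ) with hB
  have hA0 : 0 ≤ A := Finset.sum_nonneg fun j _ => by positivity
  have hB0 : 0 ≤ B := Finset.sum_nonneg fun j _ => by positivity
  -- N^j maps Vsub i into Vsub (i - 2j)
  have hpow : ∀ (j : ℕ) (i : ℤ), ∀ x ∈ Vsub i, (N ^ j) x ∈ Vsub (i - 2 * j) := by
    intro j
    induction j with
    | zero => intro i x hx; simpa using hx
    | succ j ih =>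
      intro i x hx
      have h1 : N x ∈ Vsub (i - 2) := hN i (Submodule.mem_map_of_mem hx)
      have h2 := ih (i - 2) (N x) h1
      have h3 : (N ^ (j + 1)) x = (N ^ j) (N x) := by
        rw [pow_succ]; rfl
      rw [h3]
      have h4 : i - 2 - 2 * (j : ℤ) = i - 2 * ((j : ℕ) + 1 : ℕ) := by push_cast; ring
      rwa [h4] at h2
  -- N^d kills every Vsub i with i ≠ d
  have hVd0 : ∀ (i : ℤ), i ≠ (d : ℤ) → ∀ x ∈ Vsub i, (N ^ d) x = 0 := by
    intro i hi x hx
    by_cases h : (d : ℤ) < |i|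
    · rw [hsupp i h, Submodule.mem_bot] at hx
      simp [hx]
    · push_neg at h
      have hid : i < (d : ℤ) := lt_of_le_of_ne (le_trans (le_abs_self i) h) hi
      have hmem := hpow d i x hx
      have hneg : i - 2 * (d : ℤ) < 0 := by
        have : (0 : ℤ) ≤ (d : ℤ) := Int.natCast_nonneg d
        omega
      have hb : Vsub (i - 2 * (d : ℤ)) = ⊥ := by
        apply hsupp
        rw [abs_of_neg hneg]
        omega
      rw [hb, Submodule.mem_bot] at hmem
      exact hmem
  -- the sum of the other pieces
  set Sd : Submodule ℝ V := ⨆ i : {i : ℤ // i ≠ (d : ℤ)}, Vsub i with hSd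
  have hSker : Sd ≤ LinearMap.ker (N ^ d) := by
    apply iSup_le
    rintro ⟨i, hi⟩ x hx
    exact LinearMap.mem_ker.2 (hVd0 i hi x hx)
  have hSorth : Sd ≤ (Vsub (d : ℤ))ᗮ := by
    apply iSup_le
    rintro ⟨i, hi⟩ x hx
    exact (Submodule.mem_orthogonal _ x).2 fun y hy => horth _ _ (Ne.symm hi) y hy x hx
  have hsupS : Vsub (d : ℤ) ⊔ Sd = ⊤ := by
    rw [eq_top_iff, ← hsup]
    apply iSup_le
    intro i
    by_cases hi : i = (d : ℤ)
    · subst hi; exact le_sup_left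
    · exact (le_iSup (fun i : {i : ℤ // i ≠ (d : ℤ)} => Vsub i) ⟨i, hi⟩).trans le_sup_right
  have hcompl : (Vsub (d : ℤ))ᗮ ≤ Sd := by
    intro x hx
    have hxtop : x ∈ Vsub (d : ℤ) ⊔ Sd := by rw [hsupS]; exact Submodule.mem_top
    obtain ⟨y, hy, z, hz, rfl⟩ := Submodule.mem_sup.1 hxtop
    have hzo : z ∈ (Vsub (d : ℤ))ᗮ := hSorth hz
    have hyo : y ∈ (Vsub (d : ℤ))ᗮ := by
      have := Submodule.sub_mem _ hx hzo
      simpa using this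
    have hy0 : y = 0 := by
      have := (Submodule.mem_orthogonal _ y).1 hyo y hy
      exact inner_self_eq_zero.1 this
    simpa [hy0] using hz
  -- consequently N^d only sees the orthogonal projection to Vsub d
  have hkerperp : ∀ x ∈ (Vsub (d : ℤ))ᗮ, (N ^ d) x = 0 := fun x hx =>
    LinearMap.mem_ker.1 (hSker (hcompl hx))
  have key : ∀ u : V,
      ‖(N ^ d) u‖ = ‖(Submodule.orthogonalProjectionOnto (Vsub (d : ℤ)) u : V)‖ := by
    intro u
    set p : V := (Submodule.orthogonalProjectionOnto (Vsub (d : ℤ)) u : V) with hp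
    have h1 : (N ^ d) (u - p) = 0 :=
      hkerperp _ (Submodule.sub_starProjection_mem_orthogonal (K := Vsub (d : ℤ)) u)
    have h2 : (N ^ d) u - (N ^ d) p = 0 := by rw [← map_sub, h1]
    rw [sub_eq_zero.1 h2]
    exact hiso p (Submodule.orthogonalProjectionOnto (Vsub (d : ℤ)) u).2
  -- the constant
  refine ⟨(Nat.factorial d : ℝ) * (A + B) + 1, by positivity, ?_⟩
  intro ξ k t v hk ht hv hdom w hw hw1
  have hk1 : (1 : ℝ) ≤ (k : ℝ) := by exact_mod_cast hk
  have hkpos : (0 : ℝ) < (k : ℝ) := by linarith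
  have hkd : (0 : ℝ) < (k : ℝ) ^ d := by positivity
  have hdf : (0 : ℝ) < (Nat.factorial d : ℝ) := by
    exact_mod_cast Nat.factorial_pos d
  set T : V →ₗ[ℝ] V :=
    ∑ j ∈ Finset.range (d + 1), ((k : ℝ) ^ j / (Nat.factorial j : ℝ)) • N ^ j with hT
  have hTapply : ∀ u : V,
      T u = ∑ j ∈ Finset.range (d + 1), ((k : ℝ) ^ j / (Nat.factorial j : ℝ)) • (N ^ j) u := by
    intro u
    simp [hT, LinearMap.sum_apply, LinearMap.smul_apply]
  set m : ℝ := max (1 / (k : ℝ)) (Real.exp (-t)) with hm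
  have hm0 : 0 < m := lt_of_lt_of_le (Real.exp_pos _) (le_max_right _ _)
  have hm1 : 1 / (k : ℝ) ≤ m := le_max_left _ _
  have hm2 : Real.exp (-t) ≤ m := le_max_right _ _
  set P : ℝ := ‖(Submodule.orthogonalProjectionOnto (Vsub (d : ℤ)) w : V)‖ with hP
  -- lower bound for ‖T w‖
  have hlow : (k : ℝ) ^ d / (Nat.factorial d : ℝ) * P
      ≤ ‖T w‖ + ((k : ℝ) ^ d / (k : ℝ)) * A := by
    have hsplit : T w = (∑ j ∈ Finset.range d,
        ((k : ℝ) ^ j / (Nat.factorial j : ℝ)) • (N ^ j) w)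
        + ((k : ℝ) ^ d / (Nat.factorial d : ℝ)) • (N ^ d) w := by
      rw [hTapply]
      exact Finset.sum_range_succ _ d
    have h1 : ‖((k : ℝ) ^ d / (Nat.factorial d : ℝ)) • (N ^ d) w‖
        = (k : ℝ) ^ d / (Nat.factorial d : ℝ) * P := by
      rw [norm_smul, key w, Real.norm_eq_abs, abs_of_nonneg (by positivity)]
    have h2 : ‖∑ j ∈ Finset.range d,
        ((k : ℝ) ^ j / (Nat.factorial j : ℝ)) • (N ^ j) w‖
        ≤ ((k : ℝ) ^ d / (k : ℝ)) * A := by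
      refine (norm_sum_le _ _).trans ?_
      rw [hA, Finset.mul_sum]
      refine Finset.sum_le_sum fun j hj => ?_
      have hjd : j + 1 ≤ d := Finset.mem_range.1 hj
      have hkj : (k : ℝ) ^ j ≤ (k : ℝ) ^ d / (k : ℝ) := by
        rw [le_div_iff₀ hkpos, ← pow_succ]
        exact pow_le_pow_right₀ hk1 hjd
      have hNj : ‖(N ^ j) w‖ ≤ c j := by
        have := hcb j w
        rwa [hw1, mul_one] at this
      have hfj : (0 : ℝ) < (Nat.factorial j : ℝ) := by
        exact_mod_cast Nat.factorial_pos j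
      calc ‖((k : ℝ) ^ j / (Nat.factorial j : ℝ)) • (N ^ j) w‖
          = (k : ℝ) ^ j / (Nat.factorial j : ℝ) * ‖(N ^ j) w‖ := by
            rw [norm_smul, Real.norm_eq_abs, abs_of_nonneg (by positivity)]
        _ ≤ (k : ℝ) ^ j / (Nat.factorial j : ℝ) * c j := by
            apply mul_le_mul_of_nonneg_left hNj (by positivity)
        _ = (k : ℝ) ^ j * (c j / (Nat.factorial j : ℝ)) := by ring
        _ ≤ ((k : ℝ) ^ d / (k : ℝ)) * (c j / (Nat.factorial j : ℝ)) := by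
            apply mul_le_mul_of_nonneg_right hkj (by positivity)
    have h3 : ((k : ℝ) ^ d / (Nat.factorial d : ℝ)) • (N ^ d) w
        = T w - ∑ j ∈ Finset.range d,
          ((k : ℝ) ^ j / (Nat.factorial j : ℝ)) • (N ^ j) w := by
      rw [hsplit]; abel
    calc (k : ℝ) ^ d / (Nat.factorial d : ℝ) * P
        = ‖((k : ℝ) ^ d / (Nat.factorial d : ℝ)) • (N ^ d) w‖ := h1.symm
      _ = ‖T w - ∑ j ∈ Finset.range d,
            ((k : ℝ) ^ j / (Nat.factorial j : ℝ)) • (N ^ j) w‖ := by rw [h3]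
      _ ≤ ‖T w‖ + ‖∑ j ∈ Finset.range d,
            ((k : ℝ) ^ j / (Nat.factorial j : ℝ)) • (N ^ j) w‖ := norm_sub_le _ _
      _ ≤ ‖T w‖ + ((k : ℝ) ^ d / (k : ℝ)) * A := by linarith
  -- upper bound for ‖T v‖
  have hupp : ‖T v‖ ≤ B * (k : ℝ) ^ d := by
    rw [hTapply]
    refine (norm_sum_le _ _).trans ?_
    rw [hB, Finset.sum_mul]
    refine Finset.sum_le_sum fun j hj => ?_
    have hjd : j ≤ d := Nat.lt_succ_iff.1 (Finset.mem_range.1 hj)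
    have hkj : (k : ℝ) ^ j ≤ (k : ℝ) ^ d := pow_le_pow_right₀ hk1 hjd
    have hNj : ‖(N ^ j) v‖ ≤ c j := by
      have := hcb j v
      rwa [hv, mul_one] at this
    calc ‖((k : ℝ) ^ j / (Nat.factorial j : ℝ)) • (N ^ j) v‖
        = (k : ℝ) ^ j / (Nat.factorial j : ℝ) * ‖(N ^ j) v‖ := by
          rw [norm_smul, Real.norm_eq_abs, abs_of_nonneg (by positivity)]
      _ ≤ (k : ℝ) ^ j / (Nat.factorial j : ℝ) * c j :=
          mul_le_mul_of_nonneg_left hNj (by positivity)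
      _ = (k : ℝ) ^ j * (c j / (Nat.factorial j : ℝ)) := by ring
      _ ≤ (k : ℝ) ^ d * (c j / (Nat.factorial j : ℝ)) :=
          mul_le_mul_of_nonneg_right hkj (by positivity)
      _ = c j / (Nat.factorial j : ℝ) * (k : ℝ) ^ d := by ring
  -- the domination hypothesis
  have hdom' : Real.exp t * ‖T w‖ ≤ ‖T v‖ := hdom w hw hw1
  have hexp : (0 : ℝ) < Real.exp t := Real.exp_pos t
  have hTw : ‖T w‖ ≤ Real.exp (-t) * (B * (k : ℝ) ^ d) := by
    rw [Real.exp_neg]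
    calc ‖T w‖ ≤ ‖T v‖ / Real.exp t := (le_div_iff₀' hexp).2 hdom'
      _ ≤ B * (k : ℝ) ^ d / Real.exp t := by
          gcongr
      _ = (Real.exp t)⁻¹ * (B * (k : ℝ) ^ d) := by ring
  have h1 : (k : ℝ) ^ d / (Nat.factorial d : ℝ) * P
      ≤ ((k : ℝ) ^ d / (k : ℝ)) * A + Real.exp (-t) * (B * (k : ℝ) ^ d) := by
    linarith
  have e1 : ((k : ℝ) ^ d / (k : ℝ)) * A ≤ (k : ℝ) ^ d * A * m := by
    calc ((k : ℝ) ^ d / (k : ℝ)) * A = (k : ℝ) ^ d * A * (1 / (k : ℝ)) := by ring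
      _ ≤ (k : ℝ) ^ d * A * m := by
          apply mul_le_mul_of_nonneg_left hm1 (by positivity)
  have e2 : Real.exp (-t) * (B * (k : ℝ) ^ d) ≤ (k : ℝ) ^ d * B * m := by
    calc Real.exp (-t) * (B * (k : ℝ) ^ d) = (k : ℝ) ^ d * B * Real.exp (-t) := by ring
      _ ≤ (k : ℝ) ^ d * B * m := by
          apply mul_le_mul_of_nonneg_left hm2 (by positivity)
  have h1' : (k : ℝ) ^ d / (Nat.factorial d : ℝ) * P ≤ (k : ℝ) ^ d * (A + B) * m := by
    nlinarith
  have hPle : P ≤ (Nat.factorial d : ℝ) * (A + B) * m := by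
    have hkd' : (k : ℝ) ^ d ≠ 0 := ne_of_gt hkd
    have hdf' : (Nat.factorial d : ℝ) ≠ 0 := ne_of_gt hdf
    have h5 := mul_le_mul_of_nonneg_left h1'
      (show (0 : ℝ) ≤ (Nat.factorial d : ℝ) / (k : ℝ) ^ d by positivity)
    calc P = (Nat.factorial d : ℝ) / (k : ℝ) ^ d
          * ((k : ℝ) ^ d / (Nat.factorial d : ℝ) * P) := by field_simp
      _ ≤ (Nat.factorial d : ℝ) / (k : ℝ) ^ d * ((k : ℝ) ^ d * (A + B) * m) := h5
      _ = (Nat.factorial d : ℝ) * (A + B) * m := by field_simp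
  calc P ≤ (Nat.factorial d : ℝ) * (A + B) * m := hPle
    _ ≤ ((Nat.factorial d : ℝ) * (A + B) + 1) * m := by
        apply mul_le_mul_of_nonneg_right (by linarith) (le_of_lt hm0)
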